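/- Let s ≥ 2 and θ > 0. Then there exists π ∈ (0,1) such that 1 - (1/θ)(1/2+ν)π + (1/θ)(1/2-θ+ν)π² ≠ 0, for any real ν; consequently the type-B stability function r_B(z₀,…,z_s) is unbounded as z_s → -∞ for some choice of nonpositive real z₁,…,z_{s-1}, and the necessary stability condition lim_{z_s→-∞}|r_B| ≤ 1 fails. -/

import Mathlib

open Finset Filter

private lemma inv_atBot : Tendsto (fun t : ℝ => t⁻¹) atBot (nhds 0) := by
  have h1 : Tendsto (fun t : ℝ => (-t)⁻¹) atBot (nhds 0) :=
    tendsto_inv_atTop_zero.comp tendsto_neg_atBot_atTop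
  have h2 := h1.neg
  simp only [neg_zero] at h2
  exact h2.congr fun t => by rw [inv_neg, neg_neg]

set_option maxHeartbeats 2000000 in
private lemma core_tendsto (θ ν a b P z1 c : ℝ) (hθ : 0 < θ) (hP' : P ≠ 0)
    (hc : c = 1 - a/(P*θ) + b/(P^2*θ)) (hcne : c ≠ 0) :
    Tendsto (fun t : ℝ =>
      |1 + (z1 + t) + a*(z1+t)^2/(P*(1-θ*t)) - ν*(z1+t)^2/(P*(1-θ*t))^2
        + b*θ*(z1+t)^3/(P*(1-θ*t))^2|) atBot atTop := by
  have hθ' : θ ≠ 0 := ne_of_gt hθ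
  set h : ℝ → ℝ := fun t => 1 + (z1 + t) + a*(z1+t)^2/(P*(1-θ*t))
      - ν*(z1+t)^2/(P*(1-θ*t))^2 + b*θ*(z1+t)^3/(P*(1-θ*t))^2 with hh
  set G : ℝ → ℝ := fun u => (1+z1)*u + 1 + a*(z1*u+1)^2/(P*(u-θ))
      - ν*u*(z1*u+1)^2/(P^2*(u-θ)^2) + b*θ*(z1*u+1)^3/(P^2*(u-θ)^2) with hG
  have hG0 : G 0 = c := by
    simp only [hG, mul_zero, zero_mul, zero_add, zero_sub, zero_div, sub_zero]
    rw [hc]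
    field_simp
    ring
  have hGcont : ContinuousAt G 0 := by
    have hd1 : P*((0:ℝ)-θ) ≠ 0 := by
      simp only [zero_sub]
      exact mul_ne_zero hP' (neg_ne_zero.mpr hθ')
    have hd2 : P^2*((0:ℝ)-θ)^2 ≠ 0 := by
      simp only [zero_sub]
      exact mul_ne_zero (pow_ne_zero 2 hP') (pow_ne_zero 2 (neg_ne_zero.mpr hθ'))
    rw [hG]
    fun_prop (disch := first | exact hd1 | exact hd2 | assumption)
  have hcomp : Tendsto (fun t : ℝ => G t⁻¹) atBot (nhds c) := by
    rw [← hG0]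
    exact hGcont.tendsto.comp inv_atBot
  have heq : (fun t : ℝ => h t / t) =ᶠ[atBot] (fun t : ℝ => G t⁻¹) := by
    filter_upwards [eventually_lt_atBot (0:ℝ)] with t ht
    have ht' : t ≠ 0 := ne_of_lt ht
    have hden : 1 - θ*t ≠ 0 := by nlinarith
    have h2 : t⁻¹ - θ = t⁻¹*(1-θ*t) := by field_simp
    simp only [hh, hG]
    rw [h2]
    field_simp
    ring
  have hdiv : Tendsto (fun t : ℝ => h t / t) atBot (nhds c) := hcomp.congr' heq.symm
  have habs : Tendsto (fun t : ℝ => |h t / t|) atBot (nhds |c|) :=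
    (continuous_abs.tendsto c).comp hdiv
  have hfinal : Tendsto (fun t : ℝ => |t| * |h t / t|) atBot atTop :=
    Tendsto.atTop_mul_pos (abs_pos.mpr hcne) tendsto_abs_atBot_atTop habs
  have heq2 : (fun t : ℝ => |t| * |h t / t|) =ᶠ[atBot] (fun t : ℝ => |h t|) := by
    filter_upwards [eventually_lt_atBot (0:ℝ)] with t ht
    rw [abs_div, mul_div_cancel₀]
    exact abs_ne_zero.mpr (ne_of_lt ht)
  exact (hfinal.congr' heq2).congr fun t => by rw [hh]

/-- for s ≥ 2 the leading coefficient in the asymptotic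
expansion of the type-B stability function cannot vanish for all
π ∈ (0,1); consequently r_B is unbounded as z_s → -∞ for some choice of
nonpositive real z₁,…,z_{s-1}, and the necessary stability condition fails. -/
theorem stmt_12 (s : ℕ) (hs : 2 ≤ s) (θ ν : ℝ) (hθ : θ > 0) :
    (∃ π : ℝ, 0 < π ∧ π < 1 ∧
      1 - (1/θ) * (1/2 + ν) * π + (1/θ) * (1/2 - θ + ν) * π^2 ≠ 0) ∧
    (∃ z : ℕ → ℝ, (∀ j, 1 ≤ j → j ≤ s - 1 → z j ≤ 0) ∧ ∃ z0 : ℂ,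
      Tendsto (fun t : ℝ =>
        ‖(1 + ((z0 + ∑ j ∈ Finset.Icc 1 (s-1), (z j : ℂ)) + (t : ℂ))
          + ((1/2 + ν : ℝ) : ℂ)
              * ((z0 + ∑ j ∈ Finset.Icc 1 (s-1), (z j : ℂ)) + (t : ℂ))^2
              / ((∏ j ∈ Finset.Icc 1 (s-1), (1 - (θ : ℂ) * (z j : ℂ)))
                  * (1 - (θ : ℂ) * (t : ℂ)))
          - (ν : ℂ) * ((z0 + ∑ j ∈ Finset.Icc 1 (s-1), (z j : ℂ)) + (t : ℂ))^2
              / ((∏ j ∈ Finset.Icc 1 (s-1), (1 - (θ : ℂ) * (z j : ℂ)))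
                  * (1 - (θ : ℂ) * (t : ℂ)))^2
          + ((1/2 - θ + ν : ℝ) : ℂ) * (θ : ℂ)
              * ((z0 + ∑ j ∈ Finset.Icc 1 (s-1), (z j : ℂ)) + (t : ℂ))^3
              / ((∏ j ∈ Finset.Icc 1 (s-1), (1 - (θ : ℂ) * (z j : ℂ)))
                  * (1 - (θ : ℂ) * (t : ℂ)))^2)‖)
        atBot atTop) := by
  have hθ' : θ ≠ 0 := ne_of_gt hθ
  -- choose π ∈ (0,1) with θ - (1/2-θ+ν)π ≠ 0
  obtain ⟨π, hπ0, hπ1, hbne⟩ :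
      ∃ π : ℝ, 0 < π ∧ π < 1 ∧ θ - (1/2 - θ + ν) * π ≠ 0 := by
    by_cases hcase : θ - (1/2 - θ + ν) * (1/2 : ℝ) = 0
    · refine ⟨1/3, by norm_num, by norm_num, fun h3 => ?_⟩
      have : θ = 0 := by linarith
      exact hθ' this
    · exact ⟨1/2, by norm_num, by norm_num, hcase⟩
  have hπ' : π ≠ 0 := ne_of_gt hπ0
  set c : ℝ := 1 - (1/θ) * (1/2 + ν) * π + (1/θ) * (1/2 - θ + ν) * π^2 with hcdef
  have hcfac : c = (1-π)*(θ - (1/2 - θ + ν)*π)/θ := by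
    rw [hcdef]; field_simp; ring
  have hcne : c ≠ 0 := by
    rw [hcfac]
    exact div_ne_zero (mul_ne_zero (by linarith) hbne) hθ'
  constructor
  · exact ⟨π, hπ0, hπ1, hcne⟩
  -- choose z
  set z1 : ℝ := (1 - 1/π)/θ with hz1def
  set zf : ℕ → ℝ := fun j => if j = 1 then z1 else 0 with hzf
  refine ⟨zf, ?_, 0, ?_⟩
  · intro j _ _
    by_cases hj : j = 1
    · simp only [hzf, hj, if_pos rfl]
      apply div_nonpos_of_nonpos_of_nonneg _ hθ.le
      have h1 : 1 < 1/π := by rw [lt_div_iff₀ hπ0]; linarith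
      linarith
    · simp [hzf, hj]
  · have h1mem : 1 ∈ Finset.Icc 1 (s-1) := Finset.mem_Icc.mpr ⟨le_refl 1, by omega⟩
    have hsum : (∑ j ∈ Finset.Icc 1 (s-1),
        ((zf j : ℝ) : ℂ)) = (z1 : ℂ) := by
      rw [Finset.sum_eq_single_of_mem 1 h1mem (fun j _ hj => by simp [hzf, hj])]
      simp [hzf]
    have hprod : (∏ j ∈ Finset.Icc 1 (s-1),
        (1 - (θ:ℂ) * ((zf j : ℝ) : ℂ))) = ((1/π : ℝ) : ℂ) := by
      rw [Finset.prod_eq_single_of_mem 1 h1mem (fun j _ hj => by simp [hzf, hj])]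
      simp only [hzf, if_pos rfl]
      have : (1:ℝ) - θ * z1 = 1/π := by rw [hz1def]; field_simp; ring
      push_cast [← this]
      ring
    have hcore := core_tendsto θ ν (1/2 + ν) (1/2 - θ + ν) (1/π) z1 c hθ
      (by positivity) (by rw [hcdef]; field_simp) hcne
    refine hcore.congr fun t => ?_
    have hE : (1 + (((0:ℂ) + ∑ j ∈ Finset.Icc 1 (s-1),
            ((zf j : ℝ) : ℂ)) + (t : ℂ))
          + ((1/2 + ν : ℝ) : ℂ)
              * (((0:ℂ) + ∑ j ∈ Finset.Icc 1 (s-1), ((zf j : ℝ) : ℂ)) + (t : ℂ))^2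
              / ((∏ j ∈ Finset.Icc 1 (s-1), (1 - (θ : ℂ) * ((zf j : ℝ) : ℂ)))
                  * (1 - (θ : ℂ) * (t : ℂ)))
          - (ν : ℂ) * (((0:ℂ) + ∑ j ∈ Finset.Icc 1 (s-1), ((zf j : ℝ) : ℂ)) + (t : ℂ))^2
              / ((∏ j ∈ Finset.Icc 1 (s-1), (1 - (θ : ℂ) * ((zf j : ℝ) : ℂ)))
                  * (1 - (θ : ℂ) * (t : ℂ)))^2
          + ((1/2 - θ + ν : ℝ) : ℂ) * (θ : ℂ)
              * (((0:ℂ) + ∑ j ∈ Finset.Icc 1 (s-1), ((zf j : ℝ) : ℂ)) + (t : ℂ))^3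
              / ((∏ j ∈ Finset.Icc 1 (s-1), (1 - (θ : ℂ) * ((zf j : ℝ) : ℂ)))
                  * (1 - (θ : ℂ) * (t : ℂ)))^2)
        = (((1 + (z1 + t) + (1/2+ν)*(z1+t)^2/((1/π)*(1-θ*t))
            - ν*(z1+t)^2/((1/π)*(1-θ*t))^2
            + (1/2-θ+ν)*θ*(z1+t)^3/((1/π)*(1-θ*t))^2 : ℝ)) : ℂ) := by
      rw [hsum, hprod]
      push_cast
      ring
    rw [hE]
    rw [Complex.norm_real, Real.norm_eq_abs]
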